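/- arXiv:0910.3104 — 2 statements merged into one kernel-verified Lean document; each statement's English description precedes it below -/
import Mathlib

section
/- For c > 0, the set O_c⁺ = {X ∈ sl₂(ℝ) : det X = c, x₁ > 0} (where x₁ is the i-component of X in the basis i,j',k') is preserved by the adjoint action of SL₂(ℝ), and the adjoint action of SL₂(ℝ) on O_c⁺ is transitive. -/
open Matrix

/-- The sheet `O_c⁺`: traceless matrices of determinant `c` with positive
`i`-component `x₁ = (X₁₀ - X₀₁)/2`. -/
def Ocplus (c : ℝ) : Set (Matrix (Fin 2) (Fin 2) ℝ) :=
  {X | X.trace = 0 ∧ X.det = c ∧ 0 < (X 1 0 - X 0 1) / 2}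

noncomputable def iM : Matrix (Fin 2) (Fin 2) ℝ := !![0,-1;1,0]

lemma conj_eq (b Z W : Matrix (Fin 2) (Fin 2) ℝ) (hb : b.det ≠ 0) (h : b * Z = W * b) :
    b * Z * b⁻¹ = W := by
  rw [h, mul_assoc, Matrix.mul_nonsing_inv b (isUnit_iff_ne_zero.mpr hb), mul_one]

lemma key (b : Matrix (Fin 2) (Fin 2) ℝ) (hd : 0 < b.det) (s : ℝ) (hs : 0 < s) :
    b * (s • iM) * b⁻¹ ∈ Ocplus (s^2) := by
  have hd' : b.det ≠ 0 := ne_of_gt hd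
  have hu : IsUnit b.det := isUnit_iff_ne_zero.mpr hd'
  have hinv : b⁻¹ = (b.det)⁻¹ • !![b 1 1, -(b 0 1); -(b 1 0), b 0 0] := by
    rw [Matrix.inv_def, Matrix.adjugate_fin_two, Ring.inverse_eq_inv']
  have hdet2 : b.det = b 0 0 * b 1 1 - b 0 1 * b 1 0 := Matrix.det_fin_two b
  refine ⟨?_, ?_, ?_⟩
  · rw [Matrix.trace_mul_cycle, Matrix.nonsing_inv_mul b hu, one_mul]
    simp [iM, Matrix.trace_fin_two]
  · rw [Matrix.det_mul, Matrix.det_mul, Matrix.det_smul, Matrix.det_nonsing_inv,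
      Ring.inverse_eq_inv']
    simp only [iM, Fintype.card_fin]
    rw [Matrix.det_fin_two_of]
    field_simp
    norm_num
  · have h10 : (b * (s • iM) * b⁻¹) 1 0 = (b.det)⁻¹ * (s * (b 1 0 ^2 + b 1 1 ^2)) := by
      rw [hinv]
      simp [Matrix.mul_apply, Fin.sum_univ_two, iM]
      ring
    have h01 : (b * (s • iM) * b⁻¹) 0 1 = (b.det)⁻¹ * (-(s * (b 0 0 ^2 + b 0 1 ^2))) := by
      rw [hinv]
      simp [Matrix.mul_apply, Fin.sum_univ_two, iM]
      ring
    rw [h10, h01]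
    have hi : 0 < (b.det)⁻¹ := inv_pos.mpr hd
    have hsum : 0 < b 0 0 ^2 + b 0 1 ^2 + b 1 0 ^2 + b 1 1 ^2 := by
      nlinarith [sq_nonneg (b 0 0 - b 1 1), sq_nonneg (b 0 1 + b 1 0)]
    nlinarith [mul_pos hi (mul_pos hs hsum)]

lemma g_rel (c s : ℝ) (hs2 : s^2 = c) (X : Matrix (Fin 2) (Fin 2) ℝ) (hX : X ∈ Ocplus c) :
    (s • (1 : Matrix (Fin 2) (Fin 2) ℝ) - X * iM) * (s • iM)
      = X * (s • (1 : Matrix (Fin 2) (Fin 2) ℝ) - X * iM) := by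
  obtain ⟨htr, hdet, _⟩ := hX
  rw [Matrix.trace_fin_two] at htr
  rw [Matrix.det_fin_two] at hdet
  rw [Matrix.eta_fin_two X]
  ext i j
  fin_cases i <;> fin_cases j <;>
    simp [Matrix.mul_apply, Fin.sum_univ_two, iM, Matrix.one_apply]
  · linear_combination X 0 1 * htr
  · linear_combination (-(X 0 0)) * htr + hdet - hs2
  · linear_combination X 1 1 * htr - hdet + hs2
  · linear_combination (-(X 1 0)) * htr

lemma g_det (c s : ℝ) (hs2 : s^2 = c) (X : Matrix (Fin 2) (Fin 2) ℝ) (hX : X ∈ Ocplus c) :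
    (s • (1 : Matrix (Fin 2) (Fin 2) ℝ) - X * iM).det = 2*c + s*(X 1 0 - X 0 1) := by
  obtain ⟨htr, hdet, _⟩ := hX
  rw [Matrix.trace_fin_two] at htr
  rw [Matrix.det_fin_two] at hdet
  rw [Matrix.det_fin_two]
  simp [Matrix.mul_apply, Fin.sum_univ_two, iM, Matrix.one_apply]
  linear_combination hdet + hs2

lemma g_det_pos (c s : ℝ) (hc : 0 < c) (hs : 0 < s) (hs2 : s^2 = c)
    (X : Matrix (Fin 2) (Fin 2) ℝ) (hX : X ∈ Ocplus c) :
    0 < (s • (1 : Matrix (Fin 2) (Fin 2) ℝ) - X * iM).det := by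
  rw [g_det c s hs2 X hX]
  have := hX.2.2
  nlinarith

/-- For `c > 0`, the sheet `O_c⁺` is preserved by the adjoint action of
`SL₂(ℝ)`, and this action on `O_c⁺` is transitive. -/
theorem stmt_13 (c : ℝ) (hc : 0 < c) :
    (∀ a X : Matrix (Fin 2) (Fin 2) ℝ, a.det = 1 → X ∈ Ocplus c →
      a * X * a⁻¹ ∈ Ocplus c) ∧
    (∀ X Y : Matrix (Fin 2) (Fin 2) ℝ, X ∈ Ocplus c → Y ∈ Ocplus c →
      ∃ a : Matrix (Fin 2) (Fin 2) ℝ, a.det = 1 ∧ a * X * a⁻¹ = Y) := by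
  set s : ℝ := Real.sqrt c with hsdef
  have hs : 0 < s := Real.sqrt_pos.mpr hc
  have hs2 : s^2 = c := Real.sq_sqrt hc.le
  constructor
  · intro a X ha hX
    set g : Matrix (Fin 2) (Fin 2) ℝ := s • (1 : Matrix (Fin 2) (Fin 2) ℝ) - X * iM with hgdef
    have hgrel : g * (s • iM) = X * g := g_rel c s hs2 X hX
    have hgd : 0 < g.det := g_det_pos c s hc hs hs2 X hX
    have hbd : 0 < (a * g).det := by rw [Matrix.det_mul, ha, one_mul]; exact hgd
    have hrel : (a * g) * (s • iM) = (a * X * a⁻¹) * (a * g) := by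
      have hai : a⁻¹ * a = 1 := Matrix.nonsing_inv_mul a (by rw [ha]; exact isUnit_one)
      calc (a * g) * (s • iM) = a * (g * (s • iM)) := by rw [mul_assoc]
        _ = a * (X * g) := by rw [hgrel]
        _ = (a * X * a⁻¹) * (a * g) := by
            rw [mul_assoc (a * X) a⁻¹ (a * g), ← mul_assoc a⁻¹ a g, hai, one_mul, mul_assoc]
    have := key (a * g) hbd s hs
    rwa [conj_eq (a * g) (s • iM) (a * X * a⁻¹) (ne_of_gt hbd) hrel, hs2] at this
  · intro X Y hX hY
    set gX : Matrix (Fin 2) (Fin 2) ℝ := s • (1 : Matrix (Fin 2) (Fin 2) ℝ) - X * iM with hgX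
    set gY : Matrix (Fin 2) (Fin 2) ℝ := s • (1 : Matrix (Fin 2) (Fin 2) ℝ) - Y * iM with hgY
    have hXrel : gX * (s • iM) = X * gX := g_rel c s hs2 X hX
    have hYrel : gY * (s • iM) = Y * gY := g_rel c s hs2 Y hY
    have hdX : 0 < gX.det := g_det_pos c s hc hs hs2 X hX
    have hdY : 0 < gY.det := g_det_pos c s hc hs hs2 Y hY
    have huX : IsUnit gX.det := isUnit_iff_ne_zero.mpr (ne_of_gt hdX)
    set t : ℝ := Real.sqrt (gX.det / gY.det) with htdef
    have ht2 : t^2 = gX.det / gY.det := Real.sq_sqrt (by positivity)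
    refine ⟨t • (gY * gX⁻¹), ?_, ?_⟩
    · rw [Matrix.det_smul, Matrix.det_mul, Matrix.det_nonsing_inv, Ring.inverse_eq_inv',
        Fintype.card_fin, ht2]
      field_simp
    · apply conj_eq
      · rw [Matrix.det_smul, Matrix.det_mul, Matrix.det_nonsing_inv, Ring.inverse_eq_inv',
          Fintype.card_fin, ht2]
        field_simp
        norm_num
      · -- (t • (gY * gX⁻¹)) * X = Y * (t • (gY * gX⁻¹))
        have hXinv : gX⁻¹ * X = (s • iM) * gX⁻¹ := by
          have h1 : gX⁻¹ * (X * gX) * gX⁻¹ = gX⁻¹ * (gX * (s • iM)) * gX⁻¹ := by rw [hXrel]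
          calc gX⁻¹ * X = gX⁻¹ * X * (gX * gX⁻¹) := by
                rw [Matrix.mul_nonsing_inv gX huX, mul_one]
            _ = gX⁻¹ * (X * gX) * gX⁻¹ := by noncomm_ring
            _ = gX⁻¹ * (gX * (s • iM)) * gX⁻¹ := h1
            _ = (gX⁻¹ * gX) * (s • iM) * gX⁻¹ := by noncomm_ring
            _ = (s • iM) * gX⁻¹ := by rw [Matrix.nonsing_inv_mul gX huX, one_mul]
        rw [smul_mul_assoc, mul_smul_comm]
        congr 1
        calc gY * gX⁻¹ * X = gY * (gX⁻¹ * X) := by rw [mul_assoc]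
          _ = gY * ((s • iM) * gX⁻¹) := by rw [hXinv]
          _ = (gY * (s • iM)) * gX⁻¹ := by rw [mul_assoc]
          _ = (Y * gY) * gX⁻¹ := by rw [hYrel]
          _ = Y * (gY * gX⁻¹) := by rw [mul_assoc]
end

section
/- Every positive solution y of the ODE y'' − (y')²/(2y) + 2y = 0 on an interval is of the form y(u) = A·cos²(u + u₀) for some constants A > 0 and u₀ ∈ ℝ (on an interval where cos(u+u₀) ≠ 0). Conversely, every such function satisfies the ODE. -/
open Real


lemma aux_hasDerivAt_f (A u₀ s : ℝ) :
    HasDerivAt (fun s => A * Real.cos (s + u₀) ^ 2)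
      (-(2 * A) * (Real.cos (s + u₀) * Real.sin (s + u₀))) s := by
  have h1 : HasDerivAt (fun s : ℝ => Real.cos (s + u₀)) (-Real.sin (s + u₀)) s := by
    simpa using ((hasDerivAt_id s).add_const u₀).cos
  have h2 := (h1.fun_pow 2).const_mul A
  refine h2.congr_deriv ?_
  ring

lemma aux_deriv_f (A u₀ : ℝ) :
    deriv (fun s => A * Real.cos (s + u₀) ^ 2)
      = fun s => -(2 * A) * (Real.cos (s + u₀) * Real.sin (s + u₀)) := by
  funext s; exact (aux_hasDerivAt_f A u₀ s).deriv

lemma aux_hasDerivAt_f' (A u₀ s : ℝ) :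
    HasDerivAt (fun s => -(2 * A) * (Real.cos (s + u₀) * Real.sin (s + u₀)))
      (-(2 * A) * (Real.cos (s + u₀) ^ 2 - Real.sin (s + u₀) ^ 2)) s := by
  have h1 : HasDerivAt (fun s : ℝ => Real.cos (s + u₀)) (-Real.sin (s + u₀)) s := by
    simpa using ((hasDerivAt_id s).add_const u₀).cos
  have h2 : HasDerivAt (fun s : ℝ => Real.sin (s + u₀)) (Real.cos (s + u₀)) s := by
    simpa using ((hasDerivAt_id s).add_const u₀).sin
  have := (h1.fun_mul h2).const_mul (-(2 * A))
  refine this.congr_deriv ?_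
  ring

/-- Positive solutions of `y'' - (y')²/(2y) + 2y = 0` on an open interval are
exactly the functions `u ↦ A cos²(u + u₀)` with `A > 0` (on an interval where
`cos(u + u₀) ≠ 0`). -/
theorem stmt_16 :
    (∀ (a b : ℝ) (y : ℝ → ℝ),
      (∀ u ∈ Set.Ioo a b, 0 < y u) →
      (∀ u ∈ Set.Ioo a b, DifferentiableAt ℝ y u) →
      (∀ u ∈ Set.Ioo a b, DifferentiableAt ℝ (deriv y) u) →
      (∀ u ∈ Set.Ioo a b,
        deriv (deriv y) u - (deriv y u) ^ 2 / (2 * y u) + 2 * y u = 0) →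
      ∃ A > (0 : ℝ), ∃ u₀ : ℝ, ∀ u ∈ Set.Ioo a b,
        y u = A * Real.cos (u + u₀) ^ 2) ∧
    (∀ (A u₀ : ℝ), 0 < A → ∀ u : ℝ, Real.cos (u + u₀) ≠ 0 →
      deriv (deriv (fun s => A * Real.cos (s + u₀) ^ 2)) u -
        (deriv (fun s => A * Real.cos (s + u₀) ^ 2) u) ^ 2 /
          (2 * (A * Real.cos (u + u₀) ^ 2)) +
        2 * (A * Real.cos (u + u₀) ^ 2) = 0) := by
  constructor
  · -- forward direction
    intro a b y hpos hdy hdy' hode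
    by_cases hab : b ≤ a
    · exact ⟨1, one_pos, 0, fun u hu => absurd (hu.1.trans hu.2) (not_lt.mpr hab)⟩
    push_neg at hab
    set c : ℝ := (a + b) / 2 with hc_def
    have hc : c ∈ Set.Ioo a b := ⟨by simp [hc_def]; linarith, by simp [hc_def]; linarith⟩
    set z : ℝ → ℝ := fun u => Real.sqrt (y u) with hz_def
    set z1 : ℝ → ℝ := fun u => deriv y u / (2 * Real.sqrt (y u)) with hz1_def
    have hzpos : ∀ u ∈ Set.Ioo a b, 0 < z u := fun u hu => Real.sqrt_pos.mpr (hpos u hu)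
    have hzsq : ∀ u ∈ Set.Ioo a b, z u ^ 2 = y u := fun u hu =>
      Real.sq_sqrt (hpos u hu).le
    have hz : ∀ u ∈ Set.Ioo a b, HasDerivAt z (z1 u) u := by
      intro u hu
      exact (hdy u hu).hasDerivAt.sqrt (ne_of_gt (hpos u hu))
    have hz1 : ∀ u ∈ Set.Ioo a b, HasDerivAt z1 (-z u) u := by
      intro u hu
      have hy := hpos u hu
      have hs : (0:ℝ) < Real.sqrt (y u) := Real.sqrt_pos.mpr hy
      have hnum : HasDerivAt (deriv y) (deriv (deriv y) u) u := (hdy' u hu).hasDerivAt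
      have hden : HasDerivAt (fun u => 2 * Real.sqrt (y u))
          (2 * (deriv y u / (2 * Real.sqrt (y u)))) u :=
        ((hdy u hu).hasDerivAt.sqrt (ne_of_gt hy)).const_mul 2
      have hdiv := hnum.fun_div hden (by positivity)
      refine hdiv.congr_deriv (Eq.symm ?_)
      have hode' := hode u hu
      have hsq : Real.sqrt (y u) ^ 2 = y u := Real.sq_sqrt hy.le
      show -Real.sqrt (y u) = _
      have hode2 : deriv (deriv y) u * (2 * y u) = deriv y u ^ 2 - 4 * y u ^ 2 := by
        field_simp at hode'
        linarith
      rw [eq_div_iff (by positivity)]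
      field_simp
      linear_combination (-4 * (Real.sqrt (y u) ^ 2 + y u) - 2 * deriv (deriv y) u) * hsq
        - hode2
    -- constants
    set p : ℝ := z c with hp_def
    set q : ℝ := z1 c with hq_def
    have hp : 0 < p := hzpos c hc
    set C : ℝ := Real.sqrt (p ^ 2 + q ^ 2) with hC_def
    have hC : 0 < C := Real.sqrt_pos.mpr (by positivity)
    have hCsq : C ^ 2 = p ^ 2 + q ^ 2 := Real.sq_sqrt (by positivity)
    have hpC : p / C ≤ 1 := by
      rw [div_le_one hC]
      nlinarith [hC, hp]
    have hpC' : -1 ≤ p / C := by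
      have h0 : 0 ≤ p / C := by positivity
      linarith
    set θ : ℝ := if q ≤ 0 then Real.arccos (p / C) else -Real.arccos (p / C) with hθ_def
    have hcosθ : Real.cos θ = p / C := by
      rw [hθ_def]; split_ifs
      · exact Real.cos_arccos hpC' hpC
      · rw [Real.cos_neg]; exact Real.cos_arccos hpC' hpC
    have hsinθ : Real.sin θ = -q / C := by
      have h1 : Real.sin (Real.arccos (p / C)) = Real.sqrt (1 - (p / C) ^ 2) :=
        Real.sin_arccos _
      have h2 : Real.sqrt (1 - (p / C) ^ 2) = |q| / C := by
        rw [show 1 - (p / C) ^ 2 = (q / C) ^ 2 by field_simp; nlinarith [hCsq]]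
        rw [Real.sqrt_sq_eq_abs, abs_div, abs_of_pos hC]
      rw [hθ_def]; split_ifs with hq
      · rw [h1, h2, abs_of_nonpos hq]
      · rw [Real.sin_neg, h1, h2, abs_of_pos (lt_of_not_ge hq)]; ring
    -- the two solutions of the system
    set F : ℝ → ℝ × ℝ := fun u => (z u, z1 u) with hF_def
    set G : ℝ → ℝ × ℝ := fun u =>
      (C * Real.cos (u + (θ - c)), -C * Real.sin (u + (θ - c))) with hG_def
    have hv : ∀ t : ℝ, LipschitzOnWith 1 (fun p : ℝ × ℝ => (p.2, -p.1))
        (Set.univ : Set (ℝ × ℝ)) := by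
      intro t
      apply LipschitzWith.lipschitzOnWith
      apply LipschitzWith.of_dist_le_mul
      intro p q
      simp [Prod.dist_eq, Real.dist_eq, abs_sub_comm, max_comm]
    have hFd : ∀ t ∈ Set.Ioo a b,
        HasDerivAt F ((fun p : ℝ × ℝ => (p.2, -p.1)) (F t)) t ∧ F t ∈ Set.univ := by
      intro t ht
      exact ⟨(hz t ht).prodMk (hz1 t ht), trivial⟩
    have hGd : ∀ t ∈ Set.Ioo a b,
        HasDerivAt G ((fun p : ℝ × ℝ => (p.2, -p.1)) (G t)) t ∧ G t ∈ Set.univ := by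
      intro t ht
      refine ⟨HasDerivAt.prodMk ?_ ?_, trivial⟩
      · have h1 : HasDerivAt (fun u : ℝ => Real.cos (u + (θ - c)))
            (-Real.sin (t + (θ - c))) t := by
          simpa using ((hasDerivAt_id t).add_const (θ - c)).cos
        have := h1.const_mul C
        refine this.congr_deriv (Eq.symm ?_)
        show -C * Real.sin (t + (θ - c)) = _
        ring
      · have h2 : HasDerivAt (fun u : ℝ => Real.sin (u + (θ - c)))
            (Real.cos (t + (θ - c))) t := by
          simpa using ((hasDerivAt_id t).add_const (θ - c)).sin
        have := h2.const_mul (-C)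
        refine this.congr_deriv (Eq.symm ?_)
        show -(C * Real.cos (t + (θ - c))) = _
        ring
    have heq : F c = G c := by
      have : c + (θ - c) = θ := by ring
      rw [hF_def, hG_def]
      simp only [this, hcosθ, hsinθ]
      rw [Prod.mk.injEq]
      constructor
      · field_simp; rfl
      · field_simp; rfl
    have huniq := ODE_solution_unique_of_mem_Ioo (fun t _ => hv t) hc hFd hGd heq
    refine ⟨C ^ 2, by positivity, θ - c, fun u hu => ?_⟩
    have hFG := huniq hu
    have hz_eq : z u = C * Real.cos (u + (θ - c)) := congrArg Prod.fst hFG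
    calc y u = z u ^ 2 := (hzsq u hu).symm
      _ = C ^ 2 * Real.cos (u + (θ - c)) ^ 2 := by rw [hz_eq]; ring
  · -- converse direction
    intro A u₀ hA u hcos
    rw [aux_deriv_f, (aux_hasDerivAt_f' A u₀ u).deriv]
    simp only
    have hpy := Real.sin_sq_add_cos_sq (u + u₀)
    have hA' : A ≠ 0 := ne_of_gt hA
    field_simp
    ring
end
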